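/- Let w and ε be real numbers with 0 < ε < w and w ≥ 1. Consider the instance with two jobs j_1 and j_2, both of processing time 1, with w_1 = a_1 = w and w_2 = a_2 = w − ε, and two supplies: quantity b̃_1 = w − ε at u_1 = 0 and quantity b̃_2 = w at u_2 = w. Then: (a) the schedule produced by list scheduling in non-increasing weight order starts j_1 at time w and j_2 at time w + 1, is feasible, and has total weighted completion time (w+1)·w + (w+2)·(w − ε) = 2w² + 3w − ε(w + 2); (b) the schedule starting j_2 at time 0 and j_1 at time w is feasible and has total weighted completion time (w − ε) + (w + 1)·w = w² + 2w − ε. Consequently, the ratio between the list schedule's objective value and the optimum is at least (2w² + 3w − ε(w+2)) / (w² + 2w − ε), which tends to 2 as w → ∞. -/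

import Mathlib

open Classical

/-- Cumulative supply over the first `ℓ+1` supplies (0-based indexing of supplies). -/
noncomputable def cumSupply (btilde : ℕ → ℝ) (ℓ : ℕ) : ℝ :=
  ∑ k ∈ Finset.range (ℓ + 1), btilde k

/-- List schedule in job order `0, 1, …` for unit processing times and resource
requirements `a_j = w_j`: job `j` starts at the maximum of the previous job's
completion time and `u (ℓ(j))`, where `ℓ(j)` is the first supply period whose
cumulative supply covers the total weight of the first `j+1` jobs. -/
noncomputable def wListSched (w u btilde : ℕ → ℝ) : ℕ → ℝ
  | 0 => u (sInf {ℓ : ℕ | w 0 ≤ cumSupply btilde ℓ})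
  | (j + 1) => max (wListSched w u btilde j + 1)
      (u (sInf {ℓ : ℕ | ∑ j' ∈ Finset.range (j + 2), w j' ≤ cumSupply btilde ℓ}))

/-- Feasibility of a schedule `S` of `n` unit-time jobs (indexed `0, …, n-1`) with
resource requirements equal to the weights `w`, and `q` supplies at dates
`u 0 < u 1 < …` delivering `btilde` units. -/
def FeasibleW (n q : ℕ) (w u btilde : ℕ → ℝ) (S : ℕ → ℝ) : Prop :=
  (∀ j, j < n → 0 ≤ S j) ∧
  (∀ j, j < n → ∀ j', j' < n → j ≠ j' → S j + 1 ≤ S j' ∨ S j' + 1 ≤ S j) ∧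
  (∀ t : ℝ, 0 ≤ t → ∀ ℓ, ℓ < q → u ℓ ≤ t →
    (∀ ℓ', ℓ' < q → u ℓ' ≤ t → ℓ' ≤ ℓ) →
    ∑ j ∈ (Finset.range n).filter (fun j => S j ≤ t), w j ≤ cumSupply btilde ℓ)

lemma nat_sInf_eq_one {S : Set ℕ} (h1 : 1 ∈ S) (h0 : 0 ∉ S) : sInf S = 1 := by
  refine le_antisymm (Nat.sInf_le h1) ?_
  rcases Nat.eq_zero_or_pos (sInf S) with h | h
  · exact absurd (h ▸ Nat.sInf_mem ⟨1, h1⟩) h0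
  · exact h

lemma ratio_tendsto (ε : ℝ) :
    Filter.Tendsto
      (fun W : ℝ => (2 * W ^ 2 + 3 * W - ε * (W + 2)) / (W ^ 2 + 2 * W - ε))
      Filter.atTop (nhds 2) := by
  have h1 : Filter.Tendsto (fun W : ℝ =>
      (2 + (3 - ε) / W - 2 * ε / W ^ 2) / (1 + 2 / W - ε / W ^ 2))
      Filter.atTop (nhds 2) := by
    have hnum : Filter.Tendsto (fun W : ℝ => 2 + (3 - ε) / W - 2 * ε / W ^ 2)
        Filter.atTop (nhds 2) := by
      have := ((tendsto_const_nhds (x := (2:ℝ))).add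
          (Filter.Tendsto.div_atTop (tendsto_const_nhds (x := 3-ε)) Filter.tendsto_id)).sub
          (Filter.Tendsto.div_atTop (tendsto_const_nhds (x := 2*ε))
            (Filter.tendsto_pow_atTop (n := 2) two_ne_zero))
      simpa using this
    have hden : Filter.Tendsto (fun W : ℝ => 1 + 2 / W - ε / W ^ 2)
        Filter.atTop (nhds 1) := by
      have := ((tendsto_const_nhds (x := (1:ℝ))).add
          (Filter.Tendsto.div_atTop (tendsto_const_nhds (x := (2:ℝ))) Filter.tendsto_id)).sub
          (Filter.Tendsto.div_atTop (tendsto_const_nhds (x := ε))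
            (Filter.tendsto_pow_atTop (n := 2) two_ne_zero))
      simpa using this
    have h := hnum.div hden one_ne_zero; rw [div_one] at h; exact h
  refine h1.congr' ?_
  filter_upwards [Filter.eventually_gt_atTop (max 0 (|ε|))] with W hW
  have hW0 : (0:ℝ) < W := lt_of_le_of_lt (le_max_left _ _) hW
  have hεW : |ε| < W := lt_of_le_of_lt (le_max_right _ _) hW
  have hden : W ^ 2 + 2 * W - ε ≠ 0 := by
    have : ε ≤ |ε| := le_abs_self ε
    nlinarith
  have hW0' : W ≠ 0 := ne_of_gt hW0
  have hden2 : 1 + 2 / W - ε / W ^ 2 ≠ 0 := by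
    have : 1 + 2 / W - ε / W ^ 2 = (W ^ 2 + 2 * W - ε) / W ^ 2 := by field_simp
    rw [this]
    exact div_ne_zero hden (pow_ne_zero _ hW0')
  rw [div_eq_div_iff hden2 hden]
  field_simp
  ring

/-- Tight example for the 2-approximation with two supplies.
Two unit-time jobs with `w_0 = a_0 = w` and `w_1 = a_1 = w - ε` (`0 < ε < w`,
`w ≥ 1`), supplies `b̃_1 = w - ε` at `u_1 = 0` and `b̃_2 = w` at `u_2 = w`.
(a) List scheduling in non-increasing weight order starts job `0` at `w` and job `1`
at `w + 1`; this schedule is feasible and has total weighted completion time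
`(w+1)·w + (w+2)·(w-ε) = 2w² + 3w - ε(w+2)`.
(b) Starting job `1` at `0` and job `0` at `w` is feasible with total weighted
completion time `(w-ε) + (w+1)·w = w² + 2w - ε`.
Consequently the ratio `(2w² + 3w - ε(w+2)) / (w² + 2w - ε)` tends to `2`
as `w → ∞`. -/
theorem tight_example_two_supplies (w ε : ℝ) (hε : 0 < ε) (hεw : ε < w) (hw : 1 ≤ w) :
    (wListSched (fun j => if j = 0 then w else w - ε)
        (fun ℓ => if ℓ = 0 then 0 else w)
        (fun ℓ => if ℓ = 0 then w - ε else w) 0 = w ∧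
      wListSched (fun j => if j = 0 then w else w - ε)
        (fun ℓ => if ℓ = 0 then 0 else w)
        (fun ℓ => if ℓ = 0 then w - ε else w) 1 = w + 1) ∧
    (FeasibleW 2 2 (fun j => if j = 0 then w else w - ε)
        (fun ℓ => if ℓ = 0 then 0 else w)
        (fun ℓ => if ℓ = 0 then w - ε else w)
        (fun j => if j = 0 then w else w + 1) ∧
      ∑ j ∈ Finset.range 2,
          (if j = 0 then w else w - ε) * ((if j = 0 then w else w + 1) + 1) =
        2 * w ^ 2 + 3 * w - ε * (w + 2)) ∧
    (FeasibleW 2 2 (fun j => if j = 0 then w else w - ε)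
        (fun ℓ => if ℓ = 0 then 0 else w)
        (fun ℓ => if ℓ = 0 then w - ε else w)
        (fun j => if j = 0 then w else 0) ∧
      ∑ j ∈ Finset.range 2,
          (if j = 0 then w else w - ε) * ((if j = 0 then w else 0) + 1) =
        w ^ 2 + 2 * w - ε) ∧
    Filter.Tendsto
      (fun W : ℝ => (2 * W ^ 2 + 3 * W - ε * (W + 2)) / (W ^ 2 + 2 * W - ε))
      Filter.atTop (nhds 2) := by
  have hw0 : (0:ℝ) < w := lt_trans hε hεw
  have hcum0 : cumSupply (fun ℓ => if ℓ = 0 then w - ε else w) 0 = w - ε := by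
    simp [cumSupply]
  have hcum1 : cumSupply (fun ℓ => if ℓ = 0 then w - ε else w) 1 = (w - ε) + w := by
    simp [cumSupply, Finset.sum_range_succ]
  have hS0 : wListSched (fun j => if j = 0 then w else w - ε)
      (fun ℓ => if ℓ = 0 then 0 else w)
      (fun ℓ => if ℓ = 0 then w - ε else w) 0 = w := by
    have h1 : sInf {ℓ : ℕ | w ≤
        cumSupply (fun ℓ => if ℓ = 0 then w - ε else w) ℓ} = 1 := by
      apply nat_sInf_eq_one
      · simp only [Set.mem_setOf_eq, hcum1]; linarith
      · simp only [Set.mem_setOf_eq, hcum0]; linarith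
    rw [wListSched]
    norm_num
    rintro (h | h)
    · rw [hcum0] at h; linarith
    · rw [h] at h1; simp at h1
  have hS1 : wListSched (fun j => if j = 0 then w else w - ε)
      (fun ℓ => if ℓ = 0 then 0 else w)
      (fun ℓ => if ℓ = 0 then w - ε else w) 1 = w + 1 := by
    have hsum : ∑ j' ∈ Finset.range 2, (if j' = 0 then w else w - ε) = w + (w - ε) := by
      simp [Finset.sum_range_succ]
    have h1 : sInf {ℓ : ℕ | ∑ j' ∈ Finset.range 2, (if j' = 0 then w else w - ε) ≤
        cumSupply (fun ℓ => if ℓ = 0 then w - ε else w) ℓ} = 1 := by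
      apply nat_sInf_eq_one
      · simp only [Set.mem_setOf_eq, hsum, hcum1]; linarith
      · simp only [Set.mem_setOf_eq, hsum, hcum0]; intro h; linarith
    show max _ _ = w + 1
    rw [hS0, h1]
    simp only [if_neg one_ne_zero]
    exact max_eq_left (by linarith)
  refine ⟨⟨hS0, hS1⟩, ⟨?_, ?_⟩, ⟨?_, ?_⟩, ratio_tendsto ε⟩
  · refine ⟨?_, ?_, ?_⟩
    · intro j hj
      interval_cases j <;> simp <;> linarith
    · intro j hj j' hj' hne
      interval_cases j <;> interval_cases j' <;> simp_all <;> linarith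
    · intro t ht ℓ hℓ hut hmax
      interval_cases ℓ
      · have htw : t < w := by
          by_contra h
          have := hmax 1 (by norm_num) (by simpa using not_lt.mp h)
          omega
        have : (Finset.range 2).filter
            (fun j => (if j = 0 then w else w + 1 : ℝ) ≤ t) = ∅ := by
          apply Finset.filter_false_of_mem
          intro j hj
          simp only [Finset.mem_range] at hj
          interval_cases j <;> simp <;> linarith
        rw [this, hcum0]
        simp; linarith
      · rw [hcum1]
        calc ∑ j ∈ (Finset.range 2).filter
              (fun j => (if j = 0 then w else w + 1 : ℝ) ≤ t),
              (if j = 0 then w else w - ε)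
            ≤ ∑ j ∈ Finset.range 2, (if j = 0 then w else w - ε) := by
              apply Finset.sum_le_sum_of_subset_of_nonneg (Finset.filter_subset _ _)
              intro j hj _
              simp only [Finset.mem_range] at hj
              interval_cases j <;> simp <;> linarith
          _ = w + (w - ε) := by simp [Finset.sum_range_succ]
          _ ≤ (w - ε) + w := by linarith
  · simp [Finset.sum_range_succ]; ring
  · refine ⟨?_, ?_, ?_⟩
    · intro j hj
      interval_cases j <;> simp <;> linarith
    · intro j hj j' hj' hne
      interval_cases j <;> interval_cases j' <;> simp_all <;> linarith
    · intro t ht ℓ hℓ hut hmax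
      interval_cases ℓ
      · have htw : t < w := by
          by_contra h
          have := hmax 1 (by norm_num) (by simpa using not_lt.mp h)
          omega
        have : (Finset.range 2).filter
            (fun j => (if j = 0 then w else 0 : ℝ) ≤ t) = {1} := by
          ext j
          simp only [Finset.mem_filter, Finset.mem_range, Finset.mem_singleton]
          constructor
          · rintro ⟨hj, hle⟩
            interval_cases j
            · simp at hle; linarith
            · rfl
          · rintro rfl; exact ⟨by norm_num, by simpa using ht⟩
        rw [this, hcum0]
        simp
      · rw [hcum1]
        calc ∑ j ∈ (Finset.range 2).filter
              (fun j => (if j = 0 then w else 0 : ℝ) ≤ t),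
              (if j = 0 then w else w - ε)
            ≤ ∑ j ∈ Finset.range 2, (if j = 0 then w else w - ε) := by
              apply Finset.sum_le_sum_of_subset_of_nonneg (Finset.filter_subset _ _)
              intro j hj _
              simp only [Finset.mem_range] at hj
              interval_cases j <;> simp <;> linarith
          _ = w + (w - ε) := by simp [Finset.sum_range_succ]
          _ ≤ (w - ε) + w := by linarith
  · simp [Finset.sum_range_succ]; ring
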